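/- Let G=(S,T;E) be a bipartite graph and let N be the edge set of a family of pairwise node-disjoint S-links and S-claws covering a set S'⊆S, such that every node of S has degree at most 4 in E and degree at most 3 in E−N, and every node of T has degree 3 in E. Then the set T' of nodes of T not covered by N can be covered by a matching M disjoint from N, and deleting one edge from each S-claw of N yields a matching together with a family of node-disjoint S-links whose union covers T. -/

import Mathlib

/-- Degree of a node `v` with respect to an edge set (edges as ordered `(S,T)` pairs). -/
def bipDeg {V : Type*} [DecidableEq V] (E : Finset (V × V)) (v : V) : ℕ :=
  (E.filter (fun e => e.1 = v ∨ e.2 = v)).card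

/-- A set of edges is a matching if its edges are pairwise node-disjoint. -/
def IsMatching {V : Type*} (M : Finset (V × V)) : Prop :=
  ∀ e ∈ M, ∀ f ∈ M, e ≠ f → e.1 ≠ f.1 ∧ e.2 ≠ f.2 ∧ e.1 ≠ f.2 ∧ e.2 ≠ f.1

/-- An edge set covers a node if some edge is incident to it. -/
def Covers {V : Type*} (M : Finset (V × V)) (v : V) : Prop :=
  ∃ e ∈ M, e.1 = v ∨ e.2 = v

/-- An `S`-link `(u, v, w)`: a path `u - v - w` of length two with `u, w ∈ S`
distinct and middle node `v ∈ T` (edges are ordered `(S,T)` pairs). -/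
def IsSLink {V : Type*} (E : Finset (V × V)) (p : V × V × V) : Prop :=
  (p.1, p.2.1) ∈ E ∧ (p.2.2, p.2.1) ∈ E ∧ p.1 ≠ p.2.2

/-- The nodes of an `S`-link. -/
def linkNodes {V : Type*} [DecidableEq V] (p : V × V × V) : Finset V :=
  {p.1, p.2.1, p.2.2}

/-- The two edges of an `S`-link. -/
def linkEdges {V : Type*} [DecidableEq V] (p : V × V × V) : Finset (V × V) :=
  {(p.1, p.2.1), (p.2.2, p.2.1)}

/-- A family of pairwise node-disjoint `S`-links. -/
def DisjointLinks {V : Type*} [DecidableEq V] (𝓕 : Finset (V × V × V)) : Prop :=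
  ∀ p ∈ 𝓕, ∀ q ∈ 𝓕, p ≠ q → Disjoint (linkNodes p) (linkNodes q)

/-- A 2-matching: a subset of the edges with all degrees at most two. -/
def Is2Matching {V : Type*} [DecidableEq V] (E N : Finset (V × V)) : Prop :=
  N ⊆ E ∧ ∀ v : V, bipDeg N v ≤ 2

/-- A 2-matching is `𝚅`-free if no connected component of it is a path of length two
with both end-nodes in `T` (i.e. a path `t₁ - s - t₂`). -/
def VFree {V : Type*} [DecidableEq V] (N : Finset (V × V)) : Prop :=
  ¬ ∃ s t₁ t₂ : V, t₁ ≠ t₂ ∧ (s, t₁) ∈ N ∧ (s, t₂) ∈ N ∧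
    bipDeg N s = 2 ∧ bipDeg N t₁ = 1 ∧ bipDeg N t₂ = 1

/-- An `S`-claw `(v, u₁, u₂, u₃)`: a star with three edges, center `v ∈ T` and
distinct leaves `u₁, u₂, u₃ ∈ S`. -/
def IsSClaw {V : Type*} (E : Finset (V × V)) (c : V × V × V × V) : Prop :=
  (c.2.1, c.1) ∈ E ∧ (c.2.2.1, c.1) ∈ E ∧ (c.2.2.2, c.1) ∈ E ∧
  c.2.1 ≠ c.2.2.1 ∧ c.2.1 ≠ c.2.2.2 ∧ c.2.2.1 ≠ c.2.2.2

/-- The nodes of an `S`-claw. -/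
def clawNodes {V : Type*} [DecidableEq V] (c : V × V × V × V) : Finset V :=
  {c.1, c.2.1, c.2.2.1, c.2.2.2}

/-- The three edges of an `S`-claw. -/
def clawEdges {V : Type*} [DecidableEq V] (c : V × V × V × V) : Finset (V × V) :=
  {(c.2.1, c.1), (c.2.2.1, c.1), (c.2.2.2, c.1)}

/-- Key auxiliary: if every node of `T'` has exactly 3 `D`-edges and every node of `S`
has at most 3 `D`-edges, there is a matching in `D` covering `T'`. -/
theorem exists_matching_cover {V : Type*} [DecidableEq V]
    (S T : Finset V) (hST : Disjoint S T) (D : Finset (V × V)) (hD : D ⊆ S ×ˢ T)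
    (T' : Finset V) (hT' : T' ⊆ T)
    (hdeg3 : ∀ t ∈ T', (D.filter (fun e => e.2 = t)).card = 3)
    (hdegS : ∀ s ∈ S, (D.filter (fun e => e.1 = s)).card ≤ 3) :
    ∃ M ⊆ D, IsMatching M ∧ ∀ t ∈ T', Covers M t := by
  classical
  set r : V → Finset V := fun t => (D.filter (fun e => e.2 = t)).image Prod.fst with hr
  have hrmem : ∀ t s, s ∈ r t ↔ (s, t) ∈ D := by
    intro t s
    simp only [hr, Finset.mem_image, Finset.mem_filter]
    constructor
    · rintro ⟨e, ⟨heD, he2⟩, he1⟩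
      have : e = (s, t) := by rw [Prod.ext_iff]; exact ⟨he1, he2⟩
      rwa [this] at heD
    · intro h; exact ⟨(s, t), ⟨h, rfl⟩, rfl⟩
  have hrS : ∀ t s, s ∈ r t → s ∈ S := by
    intro t s hs
    have := hD ((hrmem t s).mp hs)
    exact (Finset.mem_product.mp this).1
  have hrcard : ∀ t ∈ T', (r t).card = 3 := by
    intro t ht
    rw [hr]
    rw [Finset.card_image_of_injOn, hdeg3 t ht]
    intro e he f hf hef
    simp only [Finset.mem_coe, Finset.mem_filter] at he hf
    exact Prod.ext hef (he.2.trans hf.2.symm)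
  -- Hall's condition
  have hall : ∀ (A : Finset {x // x ∈ T'}), A.card ≤ (A.biUnion (fun t => r t.1)).card := by
    intro A
    set B := A.biUnion (fun t => r t.1) with hB
    have h1 : (A.biUnion (fun t => D.filter (fun e => e.2 = t.1))).card = 3 * A.card := by
      rw [Finset.card_biUnion]
      · rw [Finset.sum_congr rfl (fun t ht => hdeg3 t.1 t.2), Finset.sum_const, smul_eq_mul,
          mul_comm]
      · intro a _ b _ hab
        rw [Function.onFun, Finset.disjoint_left]
        intro e he1 he2
        simp only [Finset.mem_filter] at he1 he2
        exact hab (Subtype.ext (he1.2.symm.trans he2.2))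
    have h2 : A.biUnion (fun t => D.filter (fun e => e.2 = t.1)) ⊆
        B.biUnion (fun s => D.filter (fun e => e.1 = s)) := by
      intro e he
      simp only [Finset.mem_biUnion, Finset.mem_filter] at he ⊢
      obtain ⟨t, ht, heD, he2⟩ := he
      refine ⟨e.1, ?_, heD, rfl⟩
      rw [hB]
      simp only [Finset.mem_biUnion]
      exact ⟨t, ht, (hrmem t.1 e.1).mpr (by rw [← he2]; exact heD)⟩
    have h3 : (B.biUnion (fun s => D.filter (fun e => e.1 = s))).card ≤ 3 * B.card := by
      refine Finset.card_biUnion_le.trans ?_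
      calc ∑ s ∈ B, (D.filter (fun e => e.1 = s)).card ≤ ∑ _s ∈ B, 3 := by
            refine Finset.sum_le_sum ?_
            intro s hs
            rw [hB] at hs
            simp only [Finset.mem_biUnion] at hs
            obtain ⟨t, _, hst⟩ := hs
            exact hdegS s (hrS t.1 s hst)
        _ = 3 * B.card := by rw [Finset.sum_const, smul_eq_mul, mul_comm]
    have := (h1 ▸ Finset.card_le_card h2).trans h3
    exact Nat.le_of_mul_le_mul_left this (by norm_num)
  obtain ⟨f, hfinj, hfr⟩ := (Finset.all_card_le_biUnion_card_iff_exists_injective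
    (fun t : {x // x ∈ T'} => r t.1)).mp hall
  refine ⟨T'.attach.image (fun t => (f t, t.1)), ?_, ?_, ?_⟩
  · intro e he
    simp only [Finset.mem_image, Finset.mem_attach, true_and] at he
    obtain ⟨t, rfl⟩ := he
    exact (hrmem t.1 (f t)).mp (hfr t)
  · intro e he g hg hne
    simp only [Finset.mem_image, Finset.mem_attach, true_and] at he hg
    obtain ⟨a, rfl⟩ := he
    obtain ⟨b, rfl⟩ := hg
    have hab : a ≠ b := by rintro rfl; exact hne rfl
    have h1 : a.1 ≠ b.1 := fun h => hab (Subtype.ext h)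
    have hfa : f a ∈ S := hrS a.1 _ (hfr a)
    have hfb : f b ∈ S := hrS b.1 _ (hfr b)
    have haT : a.1 ∈ T := hT' a.2
    have hbT : b.1 ∈ T := hT' b.2
    exact ⟨fun h => hab (hfinj h), h1,
      fun h => (Finset.disjoint_left.mp hST hfa) (by simp only at h; rw [h]; exact hbT),
      fun h => (Finset.disjoint_left.mp hST hfb) (by simp only at h; rw [← h]; exact haT)⟩
  · intro t ht
    exact ⟨(f ⟨t, ht⟩, t), Finset.mem_image.mpr ⟨⟨t, ht⟩, Finset.mem_attach _ _, rfl⟩, Or.inr rfl⟩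

/-- Let `N` be the edge set of a family of pairwise node-disjoint `S`-links and
`S`-claws covering `S' ⊆ S`, where every node of `S` has degree at most 4 in `E` and
at most 3 in `E − N`, and every node of `T` has degree 3 in `E`. Then the set of
nodes of `T` not covered by `N` can be covered by a matching disjoint from `N`, and
deleting one edge from each `S`-claw yields a matching together with a family of
node-disjoint `S`-links whose union covers `T`. -/
theorem links_claws_completion {V : Type*} [DecidableEq V] [Fintype V]
    (S T : Finset V) (E : Finset (V × V))
    (hST : Disjoint S T) (hE : E ⊆ S ×ˢ T)
    (𝓛 : Finset (V × V × V)) (𝓒 : Finset (V × V × V × V))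
    (h𝓛 : ∀ p ∈ 𝓛, IsSLink E p) (h𝓒 : ∀ c ∈ 𝓒, IsSClaw E c)
    (h𝓛d : DisjointLinks 𝓛)
    (h𝓒d : ∀ c ∈ 𝓒, ∀ c' ∈ 𝓒, c ≠ c' → Disjoint (clawNodes c) (clawNodes c'))
    (h𝓛𝓒 : ∀ p ∈ 𝓛, ∀ c ∈ 𝓒, Disjoint (linkNodes p) (clawNodes c))
    (N : Finset (V × V)) (hN : N = 𝓛.biUnion linkEdges ∪ 𝓒.biUnion clawEdges)
    (S' : Finset V) (hS' : S' ⊆ S)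
    (hS'cov : ∀ s ∈ S', (∃ p ∈ 𝓛, s ∈ linkNodes p) ∨ ∃ c ∈ 𝓒, s ∈ clawNodes c)
    (hdS : ∀ s ∈ S, bipDeg E s ≤ 4) (hdSN : ∀ s ∈ S, bipDeg (E \ N) s ≤ 3)
    (hdT : ∀ t ∈ T, bipDeg E t = 3) :
    (∃ M ⊆ E \ N, IsMatching M ∧ ∀ t ∈ T, ¬ Covers N t → Covers M t) ∧
    (∃ (M : Finset (V × V)) (𝓕 : Finset (V × V × V)),
      M ⊆ E ∧ IsMatching M ∧
      (∀ p ∈ 𝓕, IsSLink E p ∧ linkEdges p ⊆ N) ∧ DisjointLinks 𝓕 ∧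
      ∀ t ∈ T, Covers (M ∪ 𝓕.biUnion linkEdges) t) := by
  
  classical
  -- N ⊆ E
  have hNE : N ⊆ E := by
    rw [hN]
    intro e he
    rcases Finset.mem_union.mp he with h | h
    · obtain ⟨p, hp, hep⟩ := Finset.mem_biUnion.mp h
      obtain ⟨h1, h2, _⟩ := h𝓛 p hp
      simp only [linkEdges, Finset.mem_insert, Finset.mem_singleton] at hep
      rcases hep with rfl | rfl <;> assumption
    · obtain ⟨c, hc, hec⟩ := Finset.mem_biUnion.mp h
      obtain ⟨h1, h2, h3, _⟩ := h𝓒 c hc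
      simp only [clawEdges, Finset.mem_insert, Finset.mem_singleton] at hec
      rcases hec with rfl | rfl | rfl <;> assumption
  set T' : Finset V := T.filter (fun t => ¬ Covers N t) with hT'
  -- the matching covering T'
  have hM : ∃ M ⊆ E \ N, IsMatching M ∧ ∀ t ∈ T', Covers M t := by
    refine exists_matching_cover S T hST (E \ N) ((Finset.sdiff_subset).trans hE) T'
      (Finset.filter_subset _ _) ?_ ?_
    · intro t ht
      rw [hT', Finset.mem_filter] at ht
      obtain ⟨htT, htc⟩ := ht
      have hfeq : (E \ N).filter (fun e => e.2 = t) = E.filter (fun e => e.1 = t ∨ e.2 = t) := by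
        ext e
        simp only [Finset.mem_filter, Finset.mem_sdiff]
        constructor
        · rintro ⟨⟨heE, _⟩, he2⟩; exact ⟨heE, Or.inr he2⟩
        · rintro ⟨heE, he12⟩
          have he1S : e.1 ∈ S := (Finset.mem_product.mp (hE heE)).1
          have he2 : e.2 = t := by
            rcases he12 with h | h
            · exact absurd htT (by rw [← h]; exact Finset.disjoint_left.mp hST he1S)
            · exact h
          refine ⟨⟨heE, fun heN => htc ⟨e, heN, Or.inr he2⟩⟩, he2⟩
      rw [hfeq]
      exact hdT t htT
    · intro s hs
      calc ((E \ N).filter (fun e => e.1 = s)).card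
          ≤ ((E \ N).filter (fun e => e.1 = s ∨ e.2 = s)).card :=
            Finset.card_le_card (Finset.monotone_filter_right _ (fun e _ he => Or.inl he))
        _ ≤ 3 := hdSN s hs
  obtain ⟨M, hMsub, hMmatch, hMcov⟩ := hM
  constructor
  · exact ⟨M, hMsub, hMmatch, fun t ht hnc => hMcov t (Finset.mem_filter.mpr ⟨ht, hnc⟩)⟩
  · -- second part
    set cl : V × V × V × V → V × V × V := fun c => (c.2.1, c.1, c.2.2.1) with hcl
    have hclNodes : ∀ c, linkNodes (cl c) ⊆ clawNodes c := by
      intro c x hx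
      simp only [hcl, linkNodes, clawNodes, Finset.mem_insert, Finset.mem_singleton] at hx ⊢
      tauto
    refine ⟨M, 𝓛 ∪ 𝓒.image cl, hMsub.trans Finset.sdiff_subset, hMmatch, ?_, ?_, ?_⟩
    · intro p hp
      rcases Finset.mem_union.mp hp with h | h
      · refine ⟨h𝓛 p h, ?_⟩
        rw [hN]
        exact fun e he => Finset.mem_union_left _ (Finset.mem_biUnion.mpr ⟨p, h, he⟩)
      · obtain ⟨c, hc, rfl⟩ := Finset.mem_image.mp h
        obtain ⟨h1, h2, h3, h4, _, _⟩ := h𝓒 c hc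
        refine ⟨⟨h1, h2, h4⟩, ?_⟩
        intro e he
        rw [hN]
        refine Finset.mem_union_right _ (Finset.mem_biUnion.mpr ⟨c, hc, ?_⟩)
        simp only [hcl, linkEdges, clawEdges, Finset.mem_insert, Finset.mem_singleton] at he ⊢
        tauto
    · intro p hp q hq hpq
      rcases Finset.mem_union.mp hp with h | h <;> rcases Finset.mem_union.mp hq with h' | h'
      · exact h𝓛d p h q h' hpq
      · obtain ⟨c, hc, rfl⟩ := Finset.mem_image.mp h'
        exact (h𝓛𝓒 p h c hc).mono_right (hclNodes c)
      · obtain ⟨c, hc, rfl⟩ := Finset.mem_image.mp h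
        exact ((h𝓛𝓒 q h' c hc).mono_right (hclNodes c)).symm
      · obtain ⟨c, hc, rfl⟩ := Finset.mem_image.mp h
        obtain ⟨c', hc', rfl⟩ := Finset.mem_image.mp h'
        have hcc' : c ≠ c' := by rintro rfl; exact hpq rfl
        exact ((h𝓒d c hc c' hc' hcc').mono (hclNodes c) (hclNodes c'))
    · intro t ht
      by_cases hcov : Covers N t
      · obtain ⟨e, heN, he12⟩ := hcov
        have he1S : e.1 ∈ S := (Finset.mem_product.mp (hE (hNE heN))).1
        have he2 : e.2 = t := by
          rcases he12 with h | h
          · exact absurd ht (by rw [← h]; exact Finset.disjoint_left.mp hST he1S)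
          · exact h
        rw [hN] at heN
        rcases Finset.mem_union.mp heN with h | h
        · obtain ⟨p, hp, hep⟩ := Finset.mem_biUnion.mp h
          have hmid : p.2.1 = t := by
            simp only [linkEdges, Finset.mem_insert, Finset.mem_singleton] at hep
            rcases hep with rfl | rfl <;> exact he2
          refine ⟨(p.1, p.2.1), Finset.mem_union_right _ (Finset.mem_biUnion.mpr
            ⟨p, Finset.mem_union_left _ hp, by simp [linkEdges]⟩), Or.inr hmid⟩
        · obtain ⟨c, hc, hec⟩ := Finset.mem_biUnion.mp h
          have hmid : c.1 = t := by
            simp only [clawEdges, Finset.mem_insert, Finset.mem_singleton] at hec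
            rcases hec with rfl | rfl | rfl <;> exact he2
          refine ⟨(c.2.1, c.1), Finset.mem_union_right _ (Finset.mem_biUnion.mpr
            ⟨cl c, Finset.mem_union_right _ (Finset.mem_image_of_mem cl hc),
              by simp [hcl, linkEdges]⟩), Or.inr hmid⟩
      · obtain ⟨e, heM, he12⟩ := hMcov t (Finset.mem_filter.mpr ⟨ht, hcov⟩)
        exact ⟨e, Finset.mem_union_left _ heM, he12⟩
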